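/- Let q > 1 and τ ∈ (0,1] be fixed, and for each α ∈ (0,1) let z(α, τ) ∈ [1, ∞) denote the unique solution of -(z-α)^q + (1-α)^{q-1} z^q = τ α (1-α)^{q-1}. Then lim_{α → 0⁺} z(α, τ) = ω_q(τ), where ω_q : (0,1] → [1, q/(q-1)) is the inverse of H_q(z) = -(q-1)z^q + q z^{q-1} restricted to [1, ∞). -/

import Mathlib

open Set Filter

/-- The map `x ↦ (x-α)^q - (1-α)^{q-1} x^q` is strictly increasing on `[1,∞)`. -/
private lemma psi_mono {q α : ℝ} (hq : 1 < q) (hα0 : 0 < α) (hα1 : α < 1) :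
    StrictMonoOn (fun x : ℝ => (x - α) ^ q - (1 - α) ^ (q - 1) * x ^ q) (Ici 1) := by
  have hcont : ContinuousOn (fun x : ℝ => (x - α) ^ q - (1 - α) ^ (q - 1) * x ^ q) (Ici 1) := by
    apply ContinuousOn.sub
    · exact ((continuous_id.sub continuous_const).continuousOn).rpow_const
        fun x hx => Or.inr (by linarith)
    · exact continuousOn_const.mul
        ((continuous_id.continuousOn).rpow_const fun x hx => Or.inr (by linarith))
  apply strictMonoOn_of_deriv_pos (convex_Ici 1) hcont
  intro x hx
  rw [interior_Ici] at hx
  have hx1 : (1:ℝ) < x := hx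
  have h1 : HasDerivAt (fun x : ℝ => (x - α) ^ q) (1 * q * (x - α) ^ (q - 1)) x :=
    ((hasDerivAt_id x).sub_const α).rpow_const (Or.inr hq.le)
  have h2 : HasDerivAt (fun x : ℝ => (1 - α) ^ (q - 1) * x ^ q)
      ((1 - α) ^ (q - 1) * (1 * q * x ^ (q - 1))) x :=
    ((hasDerivAt_id x).rpow_const (Or.inr hq.le)).const_mul _
  rw [show deriv (fun x : ℝ => (x - α) ^ q - (1 - α) ^ (q - 1) * x ^ q) x = _ from (h1.sub h2).deriv]
  have key : (1 - α) ^ (q - 1) * x ^ (q - 1) < (x - α) ^ (q - 1) := by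
    rw [← Real.mul_rpow (by linarith) (by linarith)]
    exact Real.rpow_lt_rpow (by nlinarith) (by nlinarith) (by linarith)
  have h := mul_lt_mul_of_pos_left key (show (0:ℝ) < q by linarith)
  nlinarith [h]

/-- `H_q(x) = -(q-1)x^q + q x^{q-1}` is strictly decreasing on `[1,∞)`. -/
private lemma H_anti {q : ℝ} (hq : 1 < q) :
    StrictAntiOn (fun x : ℝ => -(q - 1) * x ^ q + q * x ^ (q - 1)) (Ici 1) := by
  have hcont : ContinuousOn (fun x : ℝ => -(q - 1) * x ^ q + q * x ^ (q - 1)) (Ici 1) := by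
    apply ContinuousOn.add
    · exact continuousOn_const.mul
        ((continuous_id.continuousOn).rpow_const fun x hx => Or.inr (by linarith))
    · exact continuousOn_const.mul
        ((continuous_id.continuousOn).rpow_const fun x hx => Or.inr (by linarith))
  apply strictAntiOn_of_deriv_neg (convex_Ici 1) hcont
  intro x hx
  rw [interior_Ici] at hx
  have hx1 : (1:ℝ) < x := hx
  have hx0 : (0:ℝ) < x := by linarith
  have h1 : HasDerivAt (fun x : ℝ => -(q - 1) * x ^ q) (-(q - 1) * (1 * q * x ^ (q - 1))) x :=
    ((hasDerivAt_id x).rpow_const (Or.inr hq.le)).const_mul _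
  have h2 : HasDerivAt (fun x : ℝ => q * x ^ (q - 1)) (q * (1 * (q - 1) * x ^ (q - 1 - 1))) x :=
    ((hasDerivAt_id x).rpow_const (Or.inl (ne_of_gt hx0))).const_mul _
  rw [show deriv (fun x : ℝ => -(q - 1) * x ^ q + q * x ^ (q - 1)) x = _ from (h1.add h2).deriv]
  have key : x ^ (q - 1 - 1) < x ^ (q - 1) :=
    Real.rpow_lt_rpow_of_exponent_lt hx1 (by linarith)
  have hpos : (0:ℝ) < q * (q - 1) := by nlinarith
  nlinarith [mul_lt_mul_of_pos_left key hpos]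

/-- Derivative at `α = 0` of `α ↦ -(w-α)^q + (1-α)^{q-1} w^q - τ α (1-α)^{q-1}`. -/
private lemma G_deriv {q τ w : ℝ} (hq : 1 < q) (hw : 0 < w) :
    HasDerivAt (fun α : ℝ =>
        -(w - α) ^ q + (1 - α) ^ (q - 1) * w ^ q - τ * α * (1 - α) ^ (q - 1))
      (-(q - 1) * w ^ q + q * w ^ (q - 1) - τ) 0 := by
  have h1 : HasDerivAt (fun α : ℝ => (w - α) ^ q) ((0 - 1) * q * (w - 0) ^ (q - 1)) 0 :=
    ((hasDerivAt_const 0 w).sub (hasDerivAt_id 0)).rpow_const (Or.inr hq.le)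
  have h2 : HasDerivAt (fun α : ℝ => (1 - α) ^ (q - 1))
      ((0 - 1) * (q - 1) * (1 - 0) ^ (q - 1 - 1)) 0 :=
    ((hasDerivAt_const 0 1).sub (hasDerivAt_id 0)).rpow_const (Or.inl (by norm_num))
  have h3 : HasDerivAt (fun α : ℝ => τ * α) (τ * 1) 0 := (hasDerivAt_id 0).const_mul τ
  have h : HasDerivAt (fun α : ℝ =>
      -(w - α) ^ q + (1 - α) ^ (q - 1) * w ^ q - τ * α * (1 - α) ^ (q - 1)) _ 0 := (h1.neg.add (h2.mul_const (w ^ q))).sub (h3.mul h2)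
  convert h using 1
  simp [Real.one_rpow]
  ring

private lemma G_pos {q τ w : ℝ} (hq : 1 < q) (hw : 1 ≤ w)
    (hL : 0 < -(q - 1) * w ^ q + q * w ^ (q - 1) - τ) :
    ∀ᶠ α in nhdsWithin (0:ℝ) (Ioi 0),
      0 < -(w - α) ^ q + (1 - α) ^ (q - 1) * w ^ q - τ * α * (1 - α) ^ (q - 1) := by
  have hG := G_deriv (τ := τ) (w := w) hq (by linarith)
  have hs := (hasDerivAt_iff_tendsto_slope.mp hG).mono_left
    (nhdsWithin_mono 0 fun x hx => ne_of_gt hx)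
  have hev := hs.eventually_const_lt hL
  filter_upwards [hev, self_mem_nhdsWithin] with α hα hα0
  have hα0' : (0:ℝ) < α := hα0
  have hG0 : -(w - (0:ℝ)) ^ q + (1 - (0:ℝ)) ^ (q - 1) * w ^ q
      - τ * 0 * (1 - (0:ℝ)) ^ (q - 1) = 0 := by
    simp [Real.one_rpow]
  simp only [slope_def_field] at hα
  rw [hG0, sub_zero, sub_zero] at hα
  have h := mul_pos hα hα0'
  rwa [div_mul_cancel₀ _ (ne_of_gt hα0')] at h

private lemma G_neg {q τ w : ℝ} (hq : 1 < q) (hw : 1 ≤ w)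
    (hL : -(q - 1) * w ^ q + q * w ^ (q - 1) - τ < 0) :
    ∀ᶠ α in nhdsWithin (0:ℝ) (Ioi 0),
      -(w - α) ^ q + (1 - α) ^ (q - 1) * w ^ q - τ * α * (1 - α) ^ (q - 1) < 0 := by
  have hG := G_deriv (τ := τ) (w := w) hq (by linarith)
  have hs := (hasDerivAt_iff_tendsto_slope.mp hG).mono_left
    (nhdsWithin_mono 0 fun x hx => ne_of_gt hx)
  have hev := hs.eventually_lt_const hL
  filter_upwards [hev, self_mem_nhdsWithin] with α hα hα0
  have hα0' : (0:ℝ) < α := hα0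
  have hG0 : -(w - (0:ℝ)) ^ q + (1 - (0:ℝ)) ^ (q - 1) * w ^ q
      - τ * 0 * (1 - (0:ℝ)) ^ (q - 1) = 0 := by
    simp [Real.one_rpow]
  simp only [slope_def_field] at hα
  rw [hG0, sub_zero, sub_zero] at hα
  have h := mul_neg_of_neg_of_pos hα hα0'
  rwa [div_mul_cancel₀ _ (ne_of_gt hα0')] at h

/-- Let `q > 1` and `τ ∈ (0,1]`. For each `α ∈ (0,1)` let `z α ∈ [1,∞)` be the (unique)
solution of `-(z-α)^q + (1-α)^{q-1} z^q = τ α (1-α)^{q-1}`, and let `ω` be the unique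
`z ≥ 1` with `-(q-1)z^q + q z^{q-1} = τ` (i.e. `ω = ω_q(τ)`). Then `z(α,τ) → ω` as
`α → 0⁺`. -/
theorem limit_z_eq_omega (q τ : ℝ) (hq : 1 < q) (hτ0 : 0 < τ) (hτ1 : τ ≤ 1)
    (z : ℝ → ℝ)
    (hz : ∀ α ∈ Ioo (0 : ℝ) 1, z α ∈ Ici (1 : ℝ) ∧
      -(z α - α) ^ q + (1 - α) ^ (q - 1) * (z α) ^ q = τ * α * (1 - α) ^ (q - 1))
    (ω : ℝ) (hω1 : 1 ≤ ω) (hω : -(q - 1) * ω ^ q + q * ω ^ (q - 1) = τ) :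
    Tendsto z (nhdsWithin 0 (Ioi 0)) (nhds ω) := by
  have hzIoo : ∀ᶠ α in nhdsWithin (0:ℝ) (Ioi 0), α ∈ Ioo (0:ℝ) 1 :=
    Ioo_mem_nhdsGT_of_mem (by norm_num : (0:ℝ) ∈ Ico (0:ℝ) 1)
  rw [tendsto_order]
  constructor
  · -- lower bound: for a < ω, eventually a < z α
    intro a ha
    rcases lt_or_ge a 1 with hA | hA
    · filter_upwards [hzIoo] with α hα
      exact lt_of_lt_of_le hA (hz α hα).1
    · set w : ℝ := (a + ω) / 2 with hwdef
      have hw1 : 1 ≤ w := by rw [hwdef]; linarith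
      have haw : a < w := by rw [hwdef]; linarith
      have hwω : w < ω := by rw [hwdef]; linarith
      have hHw : 0 < -(q - 1) * w ^ q + q * w ^ (q - 1) - τ := by
        have h := H_anti hq (mem_Ici.mpr hw1) (mem_Ici.mpr hω1) hwω
        simp only at h
        rw [hω] at h
        linarith
      filter_upwards [hzIoo, G_pos hq hw1 hHw] with α hα hGα
      by_contra hle
      push_neg at hle
      have hmem : (1:ℝ) ≤ z α := (hz α hα).1
      have heq := (hz α hα).2
      have hzw : z α ≤ w := le_trans hle haw.le
      have hmono := (psi_mono hq hα.1 hα.2).monotoneOn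
        (mem_Ici.mpr hmem) (mem_Ici.mpr hw1) hzw
      linarith
  · -- upper bound: for b > ω, eventually z α < b
    intro b hb
    set w : ℝ := (ω + b) / 2 with hwdef
    have hw1 : 1 ≤ w := by rw [hwdef]; linarith
    have hωw : ω < w := by rw [hwdef]; linarith
    have hwb : w < b := by rw [hwdef]; linarith
    have hHw : -(q - 1) * w ^ q + q * w ^ (q - 1) - τ < 0 := by
      have h := H_anti hq (mem_Ici.mpr hω1) (mem_Ici.mpr hw1) hωw
      simp only at h
      rw [hω] at h
      linarith
    filter_upwards [hzIoo, G_neg hq hw1 hHw] with α hα hGα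
    by_contra hle
    push_neg at hle
    have hmem : (1:ℝ) ≤ z α := (hz α hα).1
    have heq := (hz α hα).2
    have hwz : w ≤ z α := le_trans hwb.le hle
    have hmono := (psi_mono hq hα.1 hα.2).monotoneOn
      (mem_Ici.mpr hw1) (mem_Ici.mpr hmem) hwz
    linarith
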